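/- Let w be a 0-prefix normal binary word containing at least one 0 (under the order 0 < 1). Then the word w · 1^{|w|} is a Lyndon word. -/

import Mathlib

/-- `w` is 0-prefix normal: no factor of `w` has more 0s than the prefix of the same length. -/
def IsPrefixNormal0 (w : List Bool) : Prop :=
  ∀ v : List Bool, v <:+: w → v.count false ≤ (w.take v.length).count false

/-- A Lyndon word: nonempty and lexicographically strictly smaller than each of its
proper nonempty suffixes (with `false < true`). -/
def IsLyndon (w : List Bool) : Prop :=
  w ≠ [] ∧ ∀ u v : List Bool, w = u ++ v → u ≠ [] → v ≠ [] → w < v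

/-- Structure of the lexicographic order on lists of booleans. -/
lemma lex_struct {a b : List Bool} (h : List.Lex (· < ·) a b) :
    a <+: b ∨ ∃ c x y, a = c ++ false :: x ∧ b = c ++ true :: y := by
  induction h with
  | nil => exact Or.inl (List.nil_prefix)
  | @rel p ps q qs hpq =>
      rcases Bool.lt_iff.mp hpq with ⟨hp, hq⟩
      exact Or.inr ⟨[], ps, qs, by simp [hp], by simp [hq]⟩
  | @cons p ps qs _ ih =>
      rcases ih with ⟨t, ht⟩ | ⟨c, x, y, hx, hy⟩
      · exact Or.inl ⟨t, by simp [ht]⟩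
      · exact Or.inr ⟨p :: c, x, y, by simp [hx], by simp [hy]⟩

theorem stmt_16 (w : List Bool) (hw : IsPrefixNormal0 w) (h0 : 0 < w.count false) :
    IsLyndon (w ++ List.replicate w.length true) := by
  set n := w.length with hn
  -- w starts with false
  have hmem : false ∈ w := List.count_pos_iff.mp h0
  obtain ⟨s, t, hst⟩ := List.append_of_mem hmem
  have hinf : [false] <:+: w := ⟨s, t, by simpa using hst.symm⟩
  have h1 := hw [false] hinf
  have hwne : w ≠ [] := by rintro rfl; simp at h0
  obtain ⟨b, w', rfl⟩ := List.exists_cons_of_ne_nil hwne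
  have hb : b = false := by
    simp [List.count_cons] at h1
    cases b
    · rfl
    · simp at h1
  subst hb
  clear hmem hst hinf h1 s t
  set W := (false :: w') ++ List.replicate n true with hW
  constructor
  · simp [hW]
  intro u v huv hu hv
  -- show W < v, v a proper nonempty suffix
  show List.Lex (· < ·) W v
  have hn' : n = w'.length + 1 := by simp [hn]
  rcases List.append_eq_append_iff.mp huv.symm with ⟨a, ha, hva⟩ | ⟨a, ha, hra⟩
  · -- v = a ++ replicate n true, false::w' = u ++ a
    have halen : a.length ≤ n := by
      have := congrArg List.length ha
      simp at this
      omega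
    -- use trichotomy
    rcases lt_trichotomy W v with h | h | h
    · exact h
    · exfalso
      have hu0 : u = [] := by
        have := congrArg List.length huv
        simp [h] at this
        exact this
      exact hu hu0
    · exfalso
      have hlex : List.Lex (· < ·) v W := h
      rcases lex_struct hlex with ⟨r, hr⟩ | ⟨c, x, y, hvc, hWc⟩
      · -- v ++ r = W; then w = a ++ trues, so u has no false, contradiction
        have hweq : (false :: w') = a ++ List.replicate (n - a.length) true := by
          have h2 : ((a ++ List.replicate n true) ++ r).take n
              = ((false :: w') ++ List.replicate n true).take n := by
            rw [hva] at hr; rw [hr]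
          rw [List.append_assoc, List.take_append,
            List.take_append, List.take_append,
            List.take_of_length_le halen, List.take_of_length_le (le_of_eq hn.symm)] at h2
          simp only [List.take_replicate, List.length_replicate,
            Nat.min_eq_left (Nat.sub_le n a.length)] at h2
          rw [show n - a.length - n = 0 from by omega,
            show n - (false :: w').length = 0 from by omega] at h2
          simpa using h2.symm
        have hcount : (false :: w').count false = a.count false := by
          rw [hweq]; simp [List.count_append, List.count_replicate]
        have hcount2 : (false :: w').count false = u.count false + a.count false := by
          rw [ha]; simp [List.count_append]
        have hu0 : u.count false = 0 := by omega
        -- but u starts with false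
        obtain ⟨e, u', rfl⟩ := List.exists_cons_of_ne_nil hu
        have he : false = e ∧ w' = u' ++ a := by simpa using ha
        rw [← he.1] at hu0
        simp [List.count_cons] at hu0
      · -- v = c ++ false :: x, W = c ++ true :: y
        -- Step 1: a = c ++ false :: d'
        have h3 : c ++ false :: x = a ++ List.replicate n true := hvc.symm.trans hva
        rcases List.append_eq_append_iff.mp h3 with ⟨d, hd1, hd2⟩ | ⟨d, hd1, hd2⟩
        swap
        · -- c = a ++ d, replicate = d ++ false :: x : false in replicate
          have : false ∈ List.replicate n true := by
            rw [hd2]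
            exact List.mem_append_right d List.mem_cons_self
          exact absurd (List.eq_of_mem_replicate this) (by simp)
        cases d with
        | nil =>
          have : false ∈ List.replicate n true := by
            rw [List.nil_append] at hd2
            rw [← hd2]
            exact List.mem_cons_self
          exact absurd (List.eq_of_mem_replicate this) (by simp)
        | cons e d' =>
          have he : false = e ∧ x = d' ++ List.replicate n true := by simpa using hd2
          rw [← he.1] at hd1
          -- a = c ++ false :: d'
          have hclen : c.length < a.length := by
            rw [hd1]; simp
          -- Step 2: false :: w' = c ++ true :: p'
          have h4 : (false :: w') ++ List.replicate n true = c ++ true :: y := hWc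
          rcases List.append_eq_append_iff.mp h4 with ⟨p, hp1, hp2⟩ | ⟨p, hp1, hp2⟩
          · -- c = (false::w') ++ p : too long
            have := congrArg List.length hp1
            simp at this
            omega
          cases p with
          | nil =>
            have := congrArg List.length hp1
            simp at this
            omega
          | cons e2 p' =>
            have he2 : true = e2 ∧ y = p' ++ List.replicate n true := by simpa using hp2
            rw [← he2.1] at hp1
            -- infix c ++ [false] of w
            have hinf2 : (c ++ [false]) <:+: (false :: w') := by
              refine ⟨u, d', ?_⟩
              rw [ha, hd1]; simp
            have hkey := hw (c ++ [false]) hinf2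
            have hlen1 : (c ++ [false]).length = c.length + 1 := by simp
            have htake : (false :: w').take (c.length + 1) = c ++ [true] := by
              rw [hp1, List.take_append,
                List.take_of_length_le (Nat.le_succ _),
                show c.length + 1 - c.length = 1 from by omega]
              simp
            rw [hlen1, htake] at hkey
            simp [List.count_append] at hkey
  · -- case B : u = w ++ a, replicate = a ++ v ⇒ v all true
    have hv' : v = List.replicate v.length true := by
      have : ∀ z ∈ v, z = true := fun z hz =>
        List.eq_of_mem_replicate (hra ▸ List.mem_append_right a hz)
      exact List.eq_replicate_length.mpr this
    obtain ⟨z, v', rfl⟩ := List.exists_cons_of_ne_nil hv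
    have hz : z = true := by
      have := hv'
      simp [List.replicate_succ] at this
      exact this.1
    subst hz
    exact List.Lex.rel (by simp [Bool.lt_iff])
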